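/- arXiv:0808.3799 — 3 statements merged into one kernel-verified Lean document; each statement's English description precedes it below -/
import Mathlib

section
/- An arbitrary fiber product of shrinkable maps is shrinkable: if (f_i : X_i → Y)_{i ∈ I} is a family of shrinkable maps over a common base Y, then the fibered product map ∏_Y X_i → Y is shrinkable. -/
open unitInterval

/-- A continuous map `f : X → Y` is *shrinkable* if it admits a continuous section
`s : Y → X` together with a fiberwise strong deformation retraction of `X` onto `s(Y)`. -/
def Shrinkable {X Y : Type*} [TopologicalSpace X] [TopologicalSpace Y]
    (f : C(X, Y)) : Prop :=
  ∃ (s : C(Y, X)) (H : C(X × I, X)),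
    (∀ y, f (s y) = y) ∧
    (∀ x, H (x, 0) = x) ∧
    (∀ x, H (x, 1) = s (f x)) ∧
    (∀ x t, f (H (x, t)) = f x) ∧
    (∀ y t, H (s y, t) = s y)

/-- An arbitrary fiber product of shrinkable maps over a common base `Y` is shrinkable.
The fibered product `∏_Y X_i` is realized as the subspace of `Y × ∏ X_i` of tuples `(y, (x_i))`
with `f_i (x_i) = y` for all `i`, mapping to `Y` by the first projection (the common value). -/
theorem shrinkable_fiberProduct {ι : Type*} {Y : Type*} [TopologicalSpace Y]
    {X : ι → Type*} [∀ i, TopologicalSpace (X i)]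
    (f : ∀ i, C(X i, Y)) (hf : ∀ i, Shrinkable (f i)) :
    Shrinkable (⟨fun p : {p : Y × (∀ i, X i) // ∀ i, f i (p.2 i) = p.1} => p.1.1,
      continuous_fst.comp continuous_subtype_val⟩ :
        C({p : Y × (∀ i, X i) // ∀ i, f i (p.2 i) = p.1}, Y)) := by
  choose s H hs h0 h1 hfib hstat using hf
  refine ⟨⟨fun y => ⟨(y, fun i => s i y), fun i => hs i y⟩, ?_⟩,
    ⟨fun q => ⟨(q.1.1.1, fun i => H i (q.1.1.2 i, q.2)), fun i => by
      rw [hfib i]; exact q.1.2 i⟩, ?_⟩, fun y => rfl, ?_, ?_, fun x t => rfl, ?_⟩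
  · refine Continuous.subtype_mk ?_ _
    exact continuous_id.prodMk (continuous_pi fun i => (s i).continuous)
  · refine Continuous.subtype_mk ?_ _
    refine Continuous.prodMk ?_ ?_
    · exact continuous_fst.comp (continuous_subtype_val.comp continuous_fst)
    · refine continuous_pi fun i => (H i).continuous.comp ?_
      exact ((continuous_apply i).comp
        (continuous_snd.comp (continuous_subtype_val.comp continuous_fst))).prodMk
        continuous_snd
  · intro x
    ext : 1
    refine Prod.ext rfl (funext fun i => ?_)
    exact h0 i _
  · intro x
    ext : 1
    refine Prod.ext rfl (funext fun i => ?_)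
    show H i (x.1.2 i, 1) = s i x.1.1
    rw [h1 i, x.2 i]
  · intro y t
    ext : 1
    exact Prod.ext rfl (funext fun i => hstat i y t)
end

section
/- Section extension along a shrinkable map: let p : X → B be a shrinkable map of topological spaces, let A ⊆ B be a closed subspace such that the inclusion A ↪ B is a Hurewicz cofibration, and let s : A → X be a partial section of p over A. Then there exists a continuous map σ : B → X extending s such that p ∘ σ is homotopic to the identity of B via a homotopy fixing A pointwise. -/
open unitInterval

/-- Continuity from a closed binary cover. -/
lemma continuous_of_closed_cover {α β : Type*} [TopologicalSpace α] [TopologicalSpace β]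
    {f : α → β} {T₁ T₂ : Set α} (h₁ : IsClosed T₁) (h₂ : IsClosed T₂)
    (hcov : T₁ ∪ T₂ = Set.univ) (hc₁ : ContinuousOn f T₁) (hc₂ : ContinuousOn f T₂) :
    Continuous f := by
  rw [continuous_iff_isClosed]
  intro C hC
  have : f ⁻¹' C = (T₁ ∩ f ⁻¹' C) ∪ (T₂ ∩ f ⁻¹' C) := by
    rw [← Set.union_inter_distrib_right, hcov, Set.univ_inter]
  rw [this]
  exact (hc₁.preimage_isClosed_of_isClosed h₁ hC).union
    (hc₂.preimage_isClosed_of_isClosed h₂ hC)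

/-- Section extension along a shrinkable map: if `p : X → B` is shrinkable, `A ⊆ B` is a
closed subspace whose inclusion is a Hurewicz cofibration (encoded by a retraction of
`B × I` onto `(A × I) ∪ B × {0}`), and `s` is a partial section of `p` over `A`, then `s`
extends to a global map `sig : B → X` with `p ∘ sig` homotopic to `id_B` rel `A`. -/
theorem shrinkable_section_extension {X B : Type*} [TopologicalSpace X] [TopologicalSpace B]
    (p : C(X, B)) (hp : Shrinkable p) (A : Set B) (hA : IsClosed A)
    (r : C(B × I, B × I))
    (hr_retr : ∀ z : B × I, (z.1 ∈ A ∨ z.2 = 0) → r z = z)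
    (hr_into : ∀ z : B × I, (r z).1 ∈ A ∨ (r z).2 = 0)
    (s : C(A, X)) (hs : ∀ a : A, p (s a) = a) :
    ∃ sig : C(B, X), (∀ a : A, sig a = s a) ∧
      ∃ H : C(B × I, B),
        (∀ b, H (b, 0) = p (sig b)) ∧ (∀ b, H (b, 1) = b) ∧
          ∀ (a : A) (t : I), H (a, t) = a := by
  classical
  obtain ⟨S, H, hS, h0, h1, hfib, hSfix⟩ := hp
  -- the piecewise map on the image of r
  set ψ : B × I → X := fun z =>
    if h : (r z).1 ∈ A then H (s ⟨(r z).1, h⟩, σ (r z).2) else S (r z).1 with hψ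
  have hψp : ∀ z, p (ψ z) = (r z).1 := by
    intro z
    by_cases h : (r z).1 ∈ A
    · simp only [hψ, dif_pos h, hfib]
      exact hs ⟨(r z).1, h⟩
    · simp only [hψ, dif_neg h, hS]
  set T₁ : Set (B × I) := (fun z => (r z).1) ⁻¹' A with hT₁
  set T₂ : Set (B × I) := {z | (r z).2 = 0} with hT₂
  have hT₁c : IsClosed T₁ := hA.preimage (continuous_fst.comp r.continuous)
  have hT₂c : IsClosed T₂ := isClosed_eq (continuous_snd.comp r.continuous) continuous_const
  have hcov : T₁ ∪ T₂ = Set.univ := by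
    ext z
    simpa [hT₁, hT₂] using hr_into z
  have hcont : Continuous ψ := by
    apply continuous_of_closed_cover hT₁c hT₂c hcov
    · rw [continuousOn_iff_continuous_restrict]
      have : T₁.domRestrict ψ = fun z : T₁ => H (s ⟨(r z.1).1, z.2⟩, σ (r z.1).2) := by
        funext z
        exact dif_pos z.2
      rw [this]
      have hA' : Continuous fun z : T₁ => (⟨(r z.1).1, z.2⟩ : A) :=
        Continuous.subtype_mk ((continuous_fst.comp r.continuous).comp continuous_subtype_val)
          fun z => z.2
      exact H.continuous.comp <| ((s.continuous.comp hA').prodMk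
        (continuous_symm.comp ((continuous_snd.comp r.continuous).comp continuous_subtype_val)))
    · rw [continuousOn_iff_continuous_restrict]
      have : T₂.domRestrict ψ = fun z : T₂ => S (r z.1).1 := by
        funext z
        by_cases h : (r z.1).1 ∈ A
        · have hz2 : (r z.1).2 = 0 := z.2
          simp only [Set.domRestrict_apply, hψ, dif_pos h, hz2, symm_zero, h1]
          congr 1
          exact hs ⟨(r z.1).1, h⟩
        · simp only [Set.domRestrict_apply, hψ, dif_neg h]
      rw [this]
      exact S.continuous.comp ((continuous_fst.comp r.continuous).comp continuous_subtype_val)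
  refine ⟨⟨fun b => ψ (b, 1), hcont.comp (continuous_id.prodMk continuous_const)⟩, ?_, ?_⟩
  · intro a
    have hr : r ((a : B), 1) = ((a : B), 1) := hr_retr _ (Or.inl a.2)
    have hmem : (r ((a : B), (1 : I))).1 ∈ A := by rw [hr]; exact a.2
    simp only [ContinuousMap.coe_mk, hψ, dif_pos hmem]
    have : (⟨(r ((a : B), (1 : I))).1, hmem⟩ : A) = a :=
      Subtype.ext (congrArg Prod.fst hr)
    rw [this]
    have h2 : (r ((a : B), (1 : I))).2 = 1 := by rw [hr]
    rw [h2, symm_one, h0]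
  · refine ⟨⟨fun z => (r (z.1, σ z.2)).1,
      (continuous_fst.comp r.continuous).comp
        (continuous_fst.prodMk (continuous_symm.comp continuous_snd))⟩, ?_, ?_, ?_⟩
    · intro b
      simp only [ContinuousMap.coe_mk, symm_zero]
      exact (hψp (b, 1)).symm
    · intro b
      simp only [ContinuousMap.coe_mk, symm_one]
      rw [hr_retr (b, 0) (Or.inr rfl)]
    · intro a t
      simp only [ContinuousMap.coe_mk]
      rw [hr_retr ((a : B), σ t) (Or.inl a.2)]
end

section
/- The space of sections of a shrinkable map is contractible: if p : X → B is shrinkable, then the space of continuous sections of p (with the compact-open topology) is contractible. -/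
open unitInterval Set

/-- The map `(f, t) ↦ H ∘ (f, const t)` is continuous in the compact-open topology. -/
lemma continuous_comp_prodMk_const {B X T Z : Type*} [TopologicalSpace B] [TopologicalSpace X]
    [TopologicalSpace T] [TopologicalSpace Z] (H : C(X × T, Z)) :
    Continuous fun q : C(B, X) × T =>
      H.comp ((q.1.prodMk (ContinuousMap.const B q.2))) := by
  rw [ContinuousMap.continuous_compactOpen]
  intro K hK U hU
  rw [isOpen_iff_forall_mem_open]
  rintro ⟨f0, t⟩ hft
  have hV : IsOpen (H ⁻¹' U) := hU.preimage H.continuous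
  have hst : (f0 '' K) ×ˢ ({t} : Set T) ⊆ H ⁻¹' U := by
    rintro ⟨x, t'⟩ ⟨⟨b, hb, rfl⟩, ht'⟩
    rcases ht' with rfl
    exact hft hb
  obtain ⟨W, J, hW, hJ, hWs, hJt, hWJ⟩ :=
    generalized_tube_lemma (hK.image f0.continuous) isCompact_singleton hV hst
  refine ⟨{f : C(B, X) | MapsTo f K W} ×ˢ J, ?_, ?_, ?_⟩
  · rintro ⟨f0', t'⟩ ⟨hf0', ht'⟩ b hb
    exact hWJ ⟨hf0' hb, ht'⟩
  · exact (ContinuousMap.isOpen_setOf_mapsTo hK hW).prod hJ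
  · exact ⟨fun b hb => hWs ⟨b, hb, rfl⟩, hJt rfl⟩

/-- The space of sections of a shrinkable map, with the compact-open topology, is
contractible. -/
theorem shrinkable_sectionSpace_contractible {X B : Type*} [TopologicalSpace X]
    [TopologicalSpace B] (p : C(X, B)) (hp : Shrinkable p) :
    ContractibleSpace {sig : C(B, X) // ∀ b, p (sig b) = b} := by
  obtain ⟨s, H, hs, h0, h1, hfib, _⟩ := hp
  rw [contractible_iff_id_nullhomotopic]
  refine ⟨⟨s, hs⟩, ⟨?_⟩⟩
  refine ⟨⟨fun q => ⟨H.comp ((q.2.1 : C(B, X)).prodMk (ContinuousMap.const B q.1)),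
      fun b => by simp only [ContinuousMap.comp_apply, ContinuousMap.prodMk, ContinuousMap.coe_mk,
        ContinuousMap.const_apply]; rw [hfib, q.2.2]⟩, ?_⟩, ?_, ?_⟩
  · exact Continuous.subtype_mk
      ((continuous_comp_prodMk_const H).comp
        ((continuous_subtype_val.comp continuous_snd).prodMk continuous_fst)) _
  · intro f0
    ext b
    simpa using h0 (f0.1 b)
  · intro f0
    ext b
    simp only [ContinuousMap.coe_mk, ContinuousMap.comp_apply]
    show H (f0.1 b, 1) = s b
    rw [h1, f0.2 b]
end
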